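/- Let κ > 0 and let ω : ℝ → ℝ satisfy ω'' = (1/4)e^{-2ω} - κ e^{2ω} with ω(0) = 0, ω'(0) = 0, and assume 4κ < 1. Then ω(u) ≥ 0 for all u, i.e. ω attains its global minimum at u = 0. -/

import Mathlib

theorem stmt_3 (κ : ℝ) (hκ : 0 < κ) (hκ' : 4 * κ < 1) (ω ω' : ℝ → ℝ)
    (hω : ∀ u, HasDerivAt ω (ω' u) u)
    (hω' : ∀ u, HasDerivAt ω' (1/4 * Real.exp (-2 * ω u) - κ * Real.exp (2 * ω u)) u)
    (h0 : ω 0 = 0) (h0' : ω' 0 = 0) :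
    ∀ u, 0 ≤ ω u := by
  set E : ℝ → ℝ := fun u => ω' u ^ 2 + κ * (Real.exp (2 * ω u) - 1)
      + 1/4 * (Real.exp (-2 * ω u) - 1) with hEdef
  have hE : ∀ u, HasDerivAt E 0 u := by
    intro u
    have h1 : HasDerivAt (fun u => ω' u ^ 2)
        ((2 : ℕ) * ω' u ^ 1 * (1/4 * Real.exp (-2 * ω u) - κ * Real.exp (2 * ω u))) u :=
      (hω' u).pow 2
    have h2 : HasDerivAt (fun u => κ * (Real.exp (2 * ω u) - 1))
        (κ * (Real.exp (2 * ω u) * (2 * ω' u))) u :=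
      ((((hω u).const_mul 2).exp).sub_const 1).const_mul κ
    have h3 : HasDerivAt (fun u => 1/4 * (Real.exp (-2 * ω u) - 1))
        (1/4 * (Real.exp (-2 * ω u) * (-2 * ω' u))) u :=
      ((((hω u).const_mul (-2)).exp).sub_const 1).const_mul (1/4)
    have := (h1.add h2).add h3
    refine this.congr_deriv ?_
    push_cast
    ring
  have hEconst : ∀ u, E u = 0 := by
    intro u
    have h1 : E u = E 0 :=
      is_const_of_deriv_eq_zero (fun x => (hE x).differentiableAt) (fun x => (hE x).deriv) u 0
    rw [h1]
    simp [hEdef, h0, h0']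
  intro u
  by_contra h
  push_neg at h
  have hx1 : Real.exp (2 * ω u) < 1 := by
    rw [Real.exp_lt_one_iff]; linarith
  have hx0 : 0 < Real.exp (2 * ω u) := Real.exp_pos _
  have hinv : Real.exp (-2 * ω u) = 1 / Real.exp (2 * ω u) := by
    rw [eq_div_iff (ne_of_gt hx0), ← Real.exp_add]; ring_nf; exact Real.exp_zero
  have hEu := hEconst u
  have hsq : 0 ≤ ω' u ^ 2 := sq_nonneg _
  set x := Real.exp (2 * ω u)
  simp only [hEdef] at hEu
  rw [hinv] at hEu
  have hmul : 0 < (1 - x) * (1 - 4 * κ * x) := by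
    apply mul_pos <;> nlinarith
  have hxne : x ≠ 0 := ne_of_gt hx0
  have h1x : 1 / x * x = 1 := by field_simp
  nlinarith [hmul, hx0, hsq, hEu]
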